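/- Let m ≥ 2 and N be naturals, x_1, ..., x_N ∈ ℝ nodes, w_1, ..., w_N ≥ 0 weights, P the N × (m+1) matrix with j-th row (1, x_j, x_j², ..., x_j^m), W = diag(w_1, ..., w_N), and H the (m+1) × (m+1) diagonal matrix diag(0, 0, w̄_2, ..., w̄_m) with w̄_ν > 0 for ν = 2, ..., m. If there exist indices j ≠ k with w_j > 0, w_k > 0 and x_j ≠ x_k, then the modified moment matrix Ā = Pᵀ W P + H is positive definite (in particular, nonsingular). -/

import Mathlib

open Matrix

/-- MMLS avoids the singular moment matrix: with `H = diag(0, 0, w̄₂, …, w̄_m)`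
(`w̄_ν > 0` for `ν ≥ 2`), the modified moment matrix `Ā = Pᵀ W P + H` is positive
definite as soon as there are two distinct nodes with positive weight. -/
theorem mmls_modified_moment_matrix_posDef
    (m N : ℕ) (hm : 2 ≤ m)
    (x : Fin N → ℝ) (w : Fin N → ℝ) (hw : ∀ j, 0 ≤ w j)
    (P : Matrix (Fin N) (Fin (m + 1)) ℝ)
    (hP : ∀ (j : Fin N) (i : Fin (m + 1)), P j i = x j ^ (i : ℕ))
    (W : Matrix (Fin N) (Fin N) ℝ) (hW : W = Matrix.diagonal w)
    (dH : Fin (m + 1) → ℝ)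
    (hd0 : ∀ i : Fin (m + 1), (i : ℕ) < 2 → dH i = 0)
    (hdpos : ∀ i : Fin (m + 1), 2 ≤ (i : ℕ) → 0 < dH i)
    (H : Matrix (Fin (m + 1)) (Fin (m + 1)) ℝ) (hH : H = Matrix.diagonal dH)
    (hjk : ∃ j k : Fin N, j ≠ k ∧ 0 < w j ∧ 0 < w k ∧ x j ≠ x k) :
    (Pᵀ * W * P + H).PosDef := by
  subst hW hH
  rw [Matrix.posDef_iff_dotProduct_mulVec]
  constructor
  · -- Hermitian
    refine IsHermitian.add ?_ (isHermitian_diagonal dH)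
    unfold Matrix.IsHermitian
    simp [Matrix.transpose_mul, Matrix.mul_assoc, Matrix.diagonal_transpose]
  · intro v hv
    -- compute the quadratic form
    have key : dotProduct (star v) ((Pᵀ * Matrix.diagonal w * P + Matrix.diagonal dH) *ᵥ v)
        = (∑ j, w j * (P *ᵥ v) j ^ 2) + ∑ i, dH i * v i ^ 2 := by
      rw [add_mulVec, dotProduct_add]
      congr 1
      · rw [Matrix.mul_assoc, ← Matrix.mulVec_mulVec, show (star v) = v from rfl,
          Matrix.dotProduct_mulVec, Matrix.vecMul_transpose, ← Matrix.mulVec_mulVec]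
        simp only [dotProduct, Matrix.mulVec_diagonal]
        refine Finset.sum_congr rfl fun j _ => ?_
        ring
      · simp only [dotProduct, Matrix.mulVec_diagonal, star_trivial]
        refine Finset.sum_congr rfl fun i _ => ?_
        ring
    rw [key]
    have hterm1 : ∀ j ∈ Finset.univ, (0:ℝ) ≤ w j * (P *ᵥ v) j ^ 2 :=
      fun j _ => mul_nonneg (hw j) (sq_nonneg _)
    have hterm2 : ∀ i ∈ Finset.univ, (0:ℝ) ≤ dH i * v i ^ 2 := by
      intro i _
      rcases lt_or_ge (i : ℕ) 2 with h | h
      · rw [hd0 i h]; simp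
      · exact mul_nonneg (hdpos i h).le (sq_nonneg _)
    by_cases hhigh : ∃ i : Fin (m + 1), 2 ≤ (i : ℕ) ∧ v i ≠ 0
    · obtain ⟨i, hi2, hvi⟩ := hhigh
      have : 0 < ∑ i, dH i * v i ^ 2 :=
        Finset.sum_pos' hterm2 ⟨i, Finset.mem_univ i,
          mul_pos (hdpos i hi2) (sq_pos_of_ne_zero hvi)⟩
      exact add_pos_of_nonneg_of_pos (Finset.sum_nonneg hterm1) this
    · push_neg at hhigh
      -- v is supported on indices 0, 1
      have hvz : ∀ i : Fin (m + 1), 2 ≤ (i : ℕ) → v i = 0 := hhigh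
      have h0 : (0 : ℕ) < m + 1 := Nat.succ_pos m
      have h1 : (1 : ℕ) < m + 1 := by omega
      set i0 : Fin (m + 1) := ⟨0, h0⟩
      set i1 : Fin (m + 1) := ⟨1, h1⟩
      have hi01 : i0 ≠ i1 := by simp [i0, i1, Fin.ext_iff]
      have hPv : ∀ j, (P *ᵥ v) j = v i0 + v i1 * x j := by
        intro j
        have h1' : (P *ᵥ v) j = ∑ i : Fin (m + 1), x j ^ (i : ℕ) * v i := by
          simp only [Matrix.mulVec, dotProduct]
          exact Finset.sum_congr rfl fun i _ => by rw [hP]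
        rw [h1']
        rw [← Finset.sum_subset (Finset.subset_univ ({i0, i1} : Finset (Fin (m + 1))))
          (fun i _ hi => ?_)]
        · rw [Finset.sum_pair hi01]
          simp [i0, i1]; ring
        · have h2 : 2 ≤ (i : ℕ) := by
            rcases Nat.lt_or_ge (i : ℕ) 2 with h | h
            · exfalso
              simp only [Finset.mem_insert, Finset.mem_singleton] at hi
              push_neg at hi
              interval_cases h' : (i : ℕ)
              · exact hi.1 (Fin.ext h')
              · exact hi.2 (Fin.ext h')
            · exact h
          rw [hvz i h2, mul_zero]
      obtain ⟨j, k, hjkne, hwj, hwk, hxjk⟩ := hjk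
      have hone : (P *ᵥ v) j ≠ 0 ∨ (P *ᵥ v) k ≠ 0 := by
        by_contra hc
        push_neg at hc
        obtain ⟨hj, hk⟩ := hc
        rw [hPv] at hj hk
        have hv1 : v i1 = 0 := by
          by_contra hv1
          apply hxjk
          have := sub_eq_zero.mpr (hj.trans hk.symm)
          have h2 : v i1 * (x j - x k) = 0 := by linarith [hj, hk]
          rcases mul_eq_zero.mp h2 with h | h
          · exact absurd h hv1
          · linarith [sub_eq_zero.mp h]
        have hv0 : v i0 = 0 := by rw [hv1] at hj; linarith
        apply hv
        funext i
        rcases Nat.lt_or_ge (i : ℕ) 2 with h | h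
        · interval_cases h' : (i : ℕ)
          · rwa [show i = i0 from Fin.ext h']
          · rwa [show i = i1 from Fin.ext h']
        · exact hvz i h
      have hpos : 0 < ∑ j, w j * (P *ᵥ v) j ^ 2 := by
        rcases hone with h | h
        · exact Finset.sum_pos' hterm1 ⟨j, Finset.mem_univ j,
            mul_pos hwj (sq_pos_of_ne_zero h)⟩
        · exact Finset.sum_pos' hterm1 ⟨k, Finset.mem_univ k,
            mul_pos hwk (sq_pos_of_ne_zero h)⟩
      exact add_pos_of_pos_of_nonneg hpos (Finset.sum_nonneg hterm2)
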